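/- Every G-invariant polynomial on ℝ² × ℝ² for the diagonal rotation action of S¹ = SO(2) is a polynomial in P₁₁ = X₁²+Y₁², P₂₂ = X₂²+Y₂², P₁₂ = X₁X₂+Y₁Y₂, and Q₁₂ = X₁Y₂−X₂Y₁. -/

import Mathlib

open MvPolynomial

/-- The diagonal rotation of a point of ℝ²×ℝ² ≅ ℝ⁴ (variables `X₁, Y₁, X₂, Y₂`). -/
noncomputable def rotPt (α : ℝ) (v : Fin 4 → ℝ) : Fin 4 → ℝ :=
  ![v 0 * Real.cos α - v 1 * Real.sin α,
    v 0 * Real.sin α + v 1 * Real.cos α,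
    v 2 * Real.cos α - v 3 * Real.sin α,
    v 2 * Real.sin α + v 3 * Real.cos α]

/-- The Hilbert basis `P₁₁ = X₁²+Y₁²`, `P₂₂ = X₂²+Y₂²`, `P₁₂ = X₁X₂+Y₁Y₂`,
`Q₁₂ = X₁Y₂−X₂Y₁`. -/
noncomputable def hilbertGens : Fin 4 → MvPolynomial (Fin 4) ℝ :=
  ![X 0 ^ 2 + X 1 ^ 2,
    X 2 ^ 2 + X 3 ^ 2,
    X 0 * X 2 + X 1 * X 3,
    X 0 * X 3 - X 2 * X 1]

section InvariantAux

open Complex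

/-- The "complexified" generators `z₁w₁, z₂w₂, z₁w₂, z₂w₁`. -/
noncomputable def zwGens : Fin 4 → MvPolynomial (Fin 4) ℂ :=
  ![X 0 * X 1, X 2 * X 3, X 0 * X 3, X 2 * X 1]

/-- The subalgebra generated by the complexified generators. -/
noncomputable def Azw : Subalgebra ℂ (MvPolynomial (Fin 4) ℂ) :=
  Algebra.adjoin ℂ (Set.range zwGens)

/-- Substitution expressing the real coordinates in terms of `z, w` coordinates. -/
noncomputable def subZW : Fin 4 → MvPolynomial (Fin 4) ℂ :=
  ![C (1/2) * (X 0 + X 1), C (-I/2) * (X 0 - X 1),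
    C (1/2) * (X 2 + X 3), C (-I/2) * (X 2 - X 3)]

/-- Inverse substitution: `z = x + iy`, `w = x - iy`. -/
noncomputable def invZW : Fin 4 → MvPolynomial (Fin 4) ℂ :=
  ![X 0 + C I * X 1, X 0 - C I * X 1, X 2 + C I * X 3, X 2 - C I * X 3]

/-- Rotation substitution over ℝ. -/
noncomputable def rotR (α : ℝ) : Fin 4 → MvPolynomial (Fin 4) ℝ :=
  ![C (Real.cos α) * X 0 - C (Real.sin α) * X 1,
    C (Real.sin α) * X 0 + C (Real.cos α) * X 1,
    C (Real.cos α) * X 2 - C (Real.sin α) * X 3,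
    C (Real.sin α) * X 2 + C (Real.cos α) * X 3]

/-- Rotation substitution over ℂ. -/
noncomputable def rotC (α : ℝ) : Fin 4 → MvPolynomial (Fin 4) ℂ :=
  ![C (Real.cos α : ℂ) * X 0 - C (Real.sin α : ℂ) * X 1,
    C (Real.sin α : ℂ) * X 0 + C (Real.cos α : ℂ) * X 1,
    C (Real.cos α : ℂ) * X 2 - C (Real.sin α : ℂ) * X 3,
    C (Real.sin α : ℂ) * X 2 + C (Real.cos α : ℂ) * X 3]

/-- Eigenvalues of the rotation in `z, w` coordinates. -/
noncomputable def circScale (α : ℝ) : Fin 4 → ℂ :=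
  ![Complex.exp (α * I), Complex.exp (-α * I), Complex.exp (α * I), Complex.exp (-α * I)]

/-- Complexified Hilbert generators. -/
noncomputable def hilbC : Fin 4 → MvPolynomial (Fin 4) ℂ :=
  fun j => map (algebraMap ℝ ℂ) (hilbertGens j)

/-- Linear change of generators relating `zwGens` to the Hilbert generators. -/
noncomputable def twist : Fin 4 → MvPolynomial (Fin 4) ℂ :=
  ![X 0, X 1, X 2 - C I * X 3, X 2 + C I * X 3]

lemma hI_sq : (C I : MvPolynomial (Fin 4) ℂ) ^ 2 = -1 := by
  rw [← map_pow, I_sq, map_neg, map_one]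

lemma hC_half : (C (2⁻¹ : ℂ) : MvPolynomial (Fin 4) ℂ) * 2 = 1 := by
  rw [show (2 : MvPolynomial (Fin 4) ℂ) = C 2 from (map_ofNat C 2).symm, ← map_mul]
  norm_num

lemma hC_negI_half : (C (-I/2 : ℂ) : MvPolynomial (Fin 4) ℂ) = -C I * C (1/2 : ℂ) := by
  rw [neg_mul, ← map_mul, ← map_neg]
  congr 1
  ring

/-- coefficient of a diagonal scaling substitution -/
lemma coeff_aeval_scale (u : Fin 4 → ℂ) (q : MvPolynomial (Fin 4) ℂ) (d : Fin 4 →₀ ℕ) :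
    coeff d (aeval (fun j => C (u j) * X j) q) = (d.prod fun j k => u j ^ k) * coeff d q := by
  classical
  have hmono : ∀ (e : Fin 4 →₀ ℕ) (c : ℂ),
      aeval (fun j => C (u j) * X j) (monomial e c)
        = monomial e (c * e.prod fun j k => u j ^ k) := by
    intro e c
    rw [aeval_monomial]
    have : (e.prod fun i k => (C (u i) * X i) ^ k)
        = C (e.prod fun j k => u j ^ k) * (e.prod fun i k => (X i : MvPolynomial (Fin 4) ℂ) ^ k) := by
      rw [Finsupp.prod, Finsupp.prod, Finsupp.prod, map_prod, ← Finset.prod_mul_distrib]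
      refine Finset.prod_congr rfl fun i _ => ?_
      rw [mul_pow, map_pow]
    rw [this, monomial_eq]
    simp [algebraMap_eq]
    ring
  conv_lhs => rw [q.as_sum, map_sum]
  rw [Finset.sum_congr rfl fun e _ => hmono e (coeff e q)]
  rw [coeff_sum]
  simp only [coeff_monomial]
  rw [Finset.sum_ite_eq' q.support d fun e => coeff e q * e.prod fun j k => u j ^ k]
  by_cases hd : d ∈ q.support
  · rw [if_pos hd]; ring
  · rw [if_neg hd, notMem_support_iff.mp hd, mul_zero]

lemma support_balanced (q : MvPolynomial (Fin 4) ℂ)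
    (hq : ∀ α : ℝ, ∀ d, coeff d (aeval (fun j => C (circScale α j) * X j) q) = coeff d q)
    (d : Fin 4 →₀ ℕ) (hd : d ∈ q.support) : d 0 + d 2 = d 1 + d 3 := by
  by_contra hne
  set a := d 0 + d 2 with ha
  set b := d 1 + d 3 with hb
  have hab : (a : ℝ) - b ≠ 0 := by
    intro h
    apply hne
    have : (a:ℝ) = b := by linarith
    exact_mod_cast this
  set α := Real.pi / ((a : ℝ) - b) with hα
  have key := hq α d
  rw [coeff_aeval_scale] at key
  have hprod : (d.prod fun j k => circScale α j ^ k) = -1 := by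
    rw [Finsupp.prod_fintype _ _ (fun i => pow_zero _), Fin.prod_univ_four]
    simp only [circScale, Matrix.cons_val_zero, Matrix.cons_val_one, Matrix.head_cons,
      Matrix.cons_val_two, Matrix.tail_cons, Matrix.cons_val_three]
    rw [← Complex.exp_nat_mul, ← Complex.exp_nat_mul, ← Complex.exp_nat_mul,
      ← Complex.exp_nat_mul, ← Complex.exp_add, ← Complex.exp_add, ← Complex.exp_add]
    have h1 : ((a:ℝ) - b) * α = Real.pi := by rw [hα]; field_simp
    have harg : (d 0 : ℂ) * (↑α*I) + (d 1 : ℂ) * (-↑α*I) + (d 2 : ℂ) * (↑α*I)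
        + (d 3 : ℂ) * (-↑α*I) = ↑Real.pi * I := by
      have h1c : ((a:ℂ) - (b:ℂ)) * (α:ℂ) = (Real.pi:ℂ) := by
        exact_mod_cast congrArg Complex.ofReal h1
      rw [ha, hb] at h1c
      push_cast at h1c ⊢
      linear_combination I * h1c
    rw [harg, Complex.exp_pi_mul_I]
  rw [hprod] at key
  have : coeff d q = 0 := by linear_combination (-1/2 : ℂ) * key
  exact (mem_support_iff.mp hd) this

lemma coord_sub (i j k : Fin 4) (d : Fin 4 →₀ ℕ) :
    ((d - (Finsupp.single i 1 + Finsupp.single j 1) : Fin 4 →₀ ℕ)) k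
      = d k - ((if i = k then 1 else 0) + (if j = k then 1 else 0)) := by
  rw [Finsupp.tsub_apply, Finsupp.add_apply, Finsupp.single_apply, Finsupp.single_apply]

lemma step_mem (i j : Fin 4) (hij : i ≠ j)
    (hmem : (X i * X j : MvPolynomial (Fin 4) ℂ) ∈ Azw)
    (d : Fin 4 →₀ ℕ) (hi : 0 < d i) (hj : 0 < d j)
    (IH : monomial (d - (Finsupp.single i 1 + Finsupp.single j 1)) (1:ℂ) ∈ Azw) :
    monomial d (1:ℂ) ∈ Azw := by
  have hXX : (X i * X j : MvPolynomial (Fin 4) ℂ)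
      = monomial (Finsupp.single i 1 + Finsupp.single j 1) 1 := by
    rw [X, X, monomial_mul, one_mul]
  have hsum : (Finsupp.single i 1 + Finsupp.single j 1)
      + (d - (Finsupp.single i 1 + Finsupp.single j 1)) = d := by
    ext k
    rw [Finsupp.add_apply, coord_sub, Finsupp.add_apply, Finsupp.single_apply,
      Finsupp.single_apply]
    split_ifs with h1 h2
    · exact absurd (h1.trans h2.symm) hij
    · subst h1; omega
    · subst ‹j = k›; omega
    · omega
  have hfact : monomial d (1:ℂ)
      = (X i * X j) * monomial (d - (Finsupp.single i 1 + Finsupp.single j 1)) 1 := by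
    rw [hXX, monomial_mul, one_mul, hsum]
  rw [hfact]
  exact mul_mem hmem IH

lemma balanced_mem (n : ℕ) : ∀ d : Fin 4 →₀ ℕ, d 0 + d 1 + d 2 + d 3 = n →
    d 0 + d 2 = d 1 + d 3 → monomial d (1:ℂ) ∈ Azw := by
  induction n using Nat.strong_induction_on with
  | _ n IH =>
    intro d hn hbal
    by_cases h0 : d 0 + d 2 = 0
    · have hd : d = 0 := by
        ext k
        fin_cases k <;> simp <;> omega
      rw [hd]
      simpa using Azw.one_mem
    · have h02 : 0 < d 0 ∨ 0 < d 2 := by omega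
      have h13 : 0 < d 1 ∨ 0 < d 3 := by omega
      rcases h02 with h02 | h02 <;> rcases h13 with h13 | h13
      · refine step_mem 0 1 (by decide) (Algebra.subset_adjoin ⟨0, by simp [zwGens]⟩) d h02 h13 ?_
        have e0 : ((d - (Finsupp.single (0:Fin 4) 1 + Finsupp.single 1 1) : Fin 4 →₀ ℕ)) 0
            = d 0 - (1 + 0) := by
          rw [coord_sub]; simp (config := { decide := true })
        have e1 : ((d - (Finsupp.single (0:Fin 4) 1 + Finsupp.single 1 1) : Fin 4 →₀ ℕ)) 1
            = d 1 - (0 + 1) := by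
          rw [coord_sub]; simp (config := { decide := true })
        have e2 : ((d - (Finsupp.single (0:Fin 4) 1 + Finsupp.single 1 1) : Fin 4 →₀ ℕ)) 2
            = d 2 - (0 + 0) := by
          rw [coord_sub]; simp (config := { decide := true })
        have e3 : ((d - (Finsupp.single (0:Fin 4) 1 + Finsupp.single 1 1) : Fin 4 →₀ ℕ)) 3
            = d 3 - (0 + 0) := by
          rw [coord_sub]; simp (config := { decide := true })
        exact IH (n - 2) (by omega)
          (d - (Finsupp.single 0 1 + Finsupp.single 1 1)) (by omega) (by omega)
      · refine step_mem 0 3 (by decide) (Algebra.subset_adjoin ⟨2, by simp [zwGens]⟩) d h02 h13 ?_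
        have e0 : ((d - (Finsupp.single (0:Fin 4) 1 + Finsupp.single 3 1) : Fin 4 →₀ ℕ)) 0
            = d 0 - (1 + 0) := by
          rw [coord_sub]; simp (config := { decide := true })
        have e1 : ((d - (Finsupp.single (0:Fin 4) 1 + Finsupp.single 3 1) : Fin 4 →₀ ℕ)) 1
            = d 1 - (0 + 0) := by
          rw [coord_sub]; simp (config := { decide := true })
        have e2 : ((d - (Finsupp.single (0:Fin 4) 1 + Finsupp.single 3 1) : Fin 4 →₀ ℕ)) 2
            = d 2 - (0 + 0) := by
          rw [coord_sub]; simp (config := { decide := true })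
        have e3 : ((d - (Finsupp.single (0:Fin 4) 1 + Finsupp.single 3 1) : Fin 4 →₀ ℕ)) 3
            = d 3 - (0 + 1) := by
          rw [coord_sub]; simp (config := { decide := true })
        exact IH (n - 2) (by omega)
          (d - (Finsupp.single 0 1 + Finsupp.single 3 1)) (by omega) (by omega)
      · refine step_mem 2 1 (by decide) (Algebra.subset_adjoin ⟨3, by simp [zwGens]⟩) d h02 h13 ?_
        have e0 : ((d - (Finsupp.single (2:Fin 4) 1 + Finsupp.single 1 1) : Fin 4 →₀ ℕ)) 0
            = d 0 - (0 + 0) := by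
          rw [coord_sub]; simp (config := { decide := true })
        have e1 : ((d - (Finsupp.single (2:Fin 4) 1 + Finsupp.single 1 1) : Fin 4 →₀ ℕ)) 1
            = d 1 - (0 + 1) := by
          rw [coord_sub]; simp (config := { decide := true })
        have e2 : ((d - (Finsupp.single (2:Fin 4) 1 + Finsupp.single 1 1) : Fin 4 →₀ ℕ)) 2
            = d 2 - (1 + 0) := by
          rw [coord_sub]; simp (config := { decide := true })
        have e3 : ((d - (Finsupp.single (2:Fin 4) 1 + Finsupp.single 1 1) : Fin 4 →₀ ℕ)) 3
            = d 3 - (0 + 0) := by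
          rw [coord_sub]; simp (config := { decide := true })
        exact IH (n - 2) (by omega)
          (d - (Finsupp.single 2 1 + Finsupp.single 1 1)) (by omega) (by omega)
      · refine step_mem 2 3 (by decide) (Algebra.subset_adjoin ⟨1, by simp [zwGens]⟩) d h02 h13 ?_
        have e0 : ((d - (Finsupp.single (2:Fin 4) 1 + Finsupp.single 3 1) : Fin 4 →₀ ℕ)) 0
            = d 0 - (0 + 0) := by
          rw [coord_sub]; simp (config := { decide := true })
        have e1 : ((d - (Finsupp.single (2:Fin 4) 1 + Finsupp.single 3 1) : Fin 4 →₀ ℕ)) 1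
            = d 1 - (0 + 0) := by
          rw [coord_sub]; simp (config := { decide := true })
        have e2 : ((d - (Finsupp.single (2:Fin 4) 1 + Finsupp.single 3 1) : Fin 4 →₀ ℕ)) 2
            = d 2 - (1 + 0) := by
          rw [coord_sub]; simp (config := { decide := true })
        have e3 : ((d - (Finsupp.single (2:Fin 4) 1 + Finsupp.single 3 1) : Fin 4 →₀ ℕ)) 3
            = d 3 - (0 + 1) := by
          rw [coord_sub]; simp (config := { decide := true })
        exact IH (n - 2) (by omega)
          (d - (Finsupp.single 2 1 + Finsupp.single 3 1)) (by omega) (by omega)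

lemma eval_aeval' (v : Fin 4 → ℝ) (f : Fin 4 → MvPolynomial (Fin 4) ℝ)
    (p : MvPolynomial (Fin 4) ℝ) :
    eval v (aeval f p) = eval (fun i => eval v (f i)) p := by
  rw [aeval_def, algebraMap_eq, eval_eval₂]
  have h : (eval v).comp (C : ℝ →+* MvPolynomial (Fin 4) ℝ) = RingHom.id ℝ :=
    RingHom.ext fun r => eval_C r
  rw [h, eval₂_id]

lemma mapC_aeval_comm (s : MvPolynomial (Fin 4) ℝ) (g : Fin 4 → MvPolynomial (Fin 4) ℝ) :
    map (algebraMap ℝ ℂ) (aeval g s)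
      = aeval (fun i => map (algebraMap ℝ ℂ) (g i)) (map (algebraMap ℝ ℂ) s) := by
  rw [map_aeval, aeval_def, eval₂_map]
  rw [coe_eval₂Hom]
  congr 1
  ext r
  simp [algebraMap_eq]

lemma round_comp :
    (aeval invZW).comp (aeval subZW) = AlgHom.id ℂ (MvPolynomial (Fin 4) ℂ) := by
  apply MvPolynomial.algHom_ext
  intro i
  fin_cases i
  · simp [subZW, invZW, hC_negI_half, Fin.mk_zero, Fin.mk_one]
    linear_combination (X 0 : MvPolynomial (Fin 4) ℂ) * hC_half
  · simp [subZW, invZW, hC_negI_half, Fin.mk_zero, Fin.mk_one]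
    linear_combination (-2 * C (2⁻¹:ℂ) * X 1) * hI_sq
      + (X 1 : MvPolynomial (Fin 4) ℂ) * hC_half
  · simp [subZW, invZW, hC_negI_half, Fin.mk_zero, Fin.mk_one]
    linear_combination (X 2 : MvPolynomial (Fin 4) ℂ) * hC_half
  · simp [subZW, invZW, hC_negI_half, Fin.mk_zero, Fin.mk_one]
    linear_combination (-2 * C (2⁻¹:ℂ) * X 3) * hI_sq
      + (X 3 : MvPolynomial (Fin 4) ℂ) * hC_half

lemma rot_conj (α : ℝ) :
    (aeval subZW).comp (aeval (rotC α))
      = (aeval (fun j => C (circScale α j) * X j)).comp (aeval subZW) := by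
  have hv : Complex.exp ((α:ℂ) * I) = Complex.cos α + Complex.sin α * I := by
    rw [Complex.exp_mul_I]
  have hv' : Complex.exp (-((α:ℂ) * I)) = Complex.cos α - Complex.sin α * I := by
    rw [show -((α:ℂ)*I) = (-(α:ℂ))*I by ring, Complex.exp_mul_I, Complex.cos_neg,
      Complex.sin_neg]
    ring
  apply MvPolynomial.algHom_ext
  intro i
  fin_cases i
  · simp [subZW, rotC, circScale, hC_negI_half, hv, hv', Fin.mk_zero, Fin.mk_one]
    ring
  · simp [subZW, rotC, circScale, hC_negI_half, hv, hv', Fin.mk_zero, Fin.mk_one]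
    linear_combination (C (2⁻¹:ℂ) * C (Complex.sin α) * (X 0 + X 1)) * hI_sq
  · simp [subZW, rotC, circScale, hC_negI_half, hv, hv', Fin.mk_zero, Fin.mk_one]
    ring
  · simp [subZW, rotC, circScale, hC_negI_half, hv, hv', Fin.mk_zero, Fin.mk_one]
    linear_combination (C (2⁻¹:ℂ) * C (Complex.sin α) * (X 2 + X 3)) * hI_sq

lemma key_images (j : Fin 4) : aeval invZW (zwGens j) = aeval hilbC (twist j) := by
  fin_cases j
  · simp [zwGens, invZW, hilbC, twist, hilbertGens, Fin.mk_zero, Fin.mk_one]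
    linear_combination (- (X 1 : MvPolynomial (Fin 4) ℂ)^2) * hI_sq
  · simp [zwGens, invZW, hilbC, twist, hilbertGens, Fin.mk_zero, Fin.mk_one]
    linear_combination (- (X 3 : MvPolynomial (Fin 4) ℂ)^2) * hI_sq
  · simp [zwGens, invZW, hilbC, twist, hilbertGens, Fin.mk_zero, Fin.mk_one]
    linear_combination (- (X 1 * X 3 : MvPolynomial (Fin 4) ℂ)) * hI_sq
  · simp [zwGens, invZW, hilbC, twist, hilbertGens, Fin.mk_zero, Fin.mk_one]
    linear_combination (- (X 1 * X 3 : MvPolynomial (Fin 4) ℂ)) * hI_sq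

end InvariantAux

/-- every SO(2)-invariant polynomial on ℝ²×ℝ² (diagonal rotation action) is a
polynomial in `P₁₁`, `P₂₂`, `P₁₂`, `Q₁₂`. -/
theorem invariant_polynomial_is_polynomial_in_hilbert_basis
    (p : MvPolynomial (Fin 4) ℝ)
    (hinv : ∀ (α : ℝ) (v : Fin 4 → ℝ), eval (rotPt α v) p = eval v p) :
    ∃ q : MvPolynomial (Fin 4) ℝ, p = aeval hilbertGens q := by
  classical
  -- Step A: invariance as a polynomial identity over ℝ
  have hA : ∀ α : ℝ, aeval (rotR α) p = p := by
    intro α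
    apply MvPolynomial.funext
    intro v
    rw [eval_aeval']
    have hvr : (fun i => eval v (rotR α i)) = rotPt α v := by
      funext i
      fin_cases i <;> simp [rotR, rotPt, Fin.mk_zero, Fin.mk_one] <;> ring
    rw [hvr, hinv]
  -- Step B: complexify
  set pc := map (algebraMap ℝ ℂ) p with hpc_def
  have hB : ∀ α : ℝ, aeval (rotC α) pc = pc := by
    intro α
    have h1 := mapC_aeval_comm p (rotR α)
    rw [hA α] at h1
    have h2 : (fun i => map (algebraMap ℝ ℂ) (rotR α i)) = rotC α := by
      funext i
      fin_cases i <;> simp [rotR, rotC, Fin.mk_zero, Fin.mk_one]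
    rw [h2] at h1
    exact h1.symm
  -- Step C: pass to z,w coordinates, where the action is diagonal
  set q := aeval subZW pc with hq_def
  have hC : ∀ α : ℝ, aeval (fun j => C (circScale α j) * X j) q = q := by
    intro α
    calc aeval (fun j => C (circScale α j) * X j) q
        = aeval subZW (aeval (rotC α) pc) := by
          rw [hq_def, ← AlgHom.comp_apply, ← rot_conj α, AlgHom.comp_apply]
      _ = q := by rw [hB α]
  -- Step D: support is balanced
  have hbal : ∀ d ∈ q.support, d 0 + d 2 = d 1 + d 3 :=
    support_balanced q (fun α d => by rw [hC α])
  -- Step E: q lies in the subalgebra generated by zwGens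
  have hqA : q ∈ Azw := by
    have hmem : (∑ d ∈ q.support, monomial d (coeff d q)) ∈ Azw := by
      refine Subalgebra.sum_mem _ fun d hd => ?_
      rw [← mul_one (coeff d q), ← C_mul_monomial]
      exact mul_mem (Azw.algebraMap_mem (coeff d q))
        (balanced_mem (d 0 + d 1 + d 2 + d 3) d rfl (hbal d hd))
    rwa [← q.as_sum] at hmem
  obtain ⟨r, hr⟩ : ∃ r, aeval zwGens r = q := by
    rw [Azw, Algebra.adjoin_range_eq_range_aeval] at hqA
    exact hqA
  -- Step F: back to the original coordinates
  have hround : aeval invZW q = pc := by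
    rw [hq_def, ← AlgHom.comp_apply, round_comp, AlgHom.id_apply]
  have hkey : (aeval invZW).comp (aeval zwGens)
      = (aeval hilbC).comp (aeval twist) := by
    apply MvPolynomial.algHom_ext
    intro i
    simpa using key_images i
  set r' := aeval twist r with hr'_def
  have hpc2 : pc = aeval hilbC r' := by
    rw [← hround, ← hr, ← AlgHom.comp_apply, hkey, AlgHom.comp_apply]
  -- Step G: descend to real coefficients
  set qre := ∑ d ∈ r'.support, monomial d ((coeff d r').re) with hqre_def
  set qim := ∑ d ∈ r'.support, monomial d ((coeff d r').im) with hqim_def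
  have hcre : ∀ d, coeff d qre = (coeff d r').re := by
    intro d
    rw [hqre_def, coeff_sum]
    simp only [coeff_monomial]
    rw [Finset.sum_ite_eq' r'.support d]
    by_cases hd : d ∈ r'.support
    · rw [if_pos hd]
    · rw [if_neg hd, notMem_support_iff.mp hd]; simp
  have hcim : ∀ d, coeff d qim = (coeff d r').im := by
    intro d
    rw [hqim_def, coeff_sum]
    simp only [coeff_monomial]
    rw [Finset.sum_ite_eq' r'.support d]
    by_cases hd : d ∈ r'.support
    · rw [if_pos hd]
    · rw [if_neg hd, notMem_support_iff.mp hd]; simp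
  have hsplit : r' = map (algebraMap ℝ ℂ) qre + C Complex.I * map (algebraMap ℝ ℂ) qim := by
    apply MvPolynomial.ext
    intro d
    rw [coeff_add, coeff_C_mul, coeff_map, coeff_map, hcre, hcim]
    simp only [Complex.coe_algebraMap]
    rw [mul_comm]
    exact (Complex.re_add_im _).symm
  have hfin : map (algebraMap ℝ ℂ) p
      = map (algebraMap ℝ ℂ) (aeval hilbertGens qre)
        + C Complex.I * map (algebraMap ℝ ℂ) (aeval hilbertGens qim) := by
    rw [mapC_aeval_comm, mapC_aeval_comm]
    have hH : (fun i => map (algebraMap ℝ ℂ) (hilbertGens i)) = hilbC := rfl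
    rw [hH, ← hpc_def, hpc2, hsplit]
    rw [map_add, map_mul, aeval_C]
    simp [algebraMap_eq]
  refine ⟨qre, ?_⟩
  apply MvPolynomial.ext
  intro d
  have hco := congrArg (coeff d) hfin
  rw [coeff_map, coeff_add, coeff_C_mul, coeff_map, coeff_map] at hco
  have := congrArg Complex.re hco
  simpa using this
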